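/- arXiv:2304.00094 — 2 statements merged into one kernel-verified Lean document; each statement's English description precedes it below -/
import Mathlib

section
/- Let d ≥ 1 and M > 0 a real number, and let a, b ∈ ℝ^d. Define the equispaced points y_ℓ := (ℓ_1/M, …, ℓ_d/M) for ℓ ∈ ℤ^d. Then the series ∑_{ℓ∈ℤ^d} sinc(Mπ(a − y_ℓ)) · sinc(Mπ(b − y_ℓ)) converges absolutely and equals sinc(Mπ(a − b)), where sinc of a vector is the product of the one-dimensional sinc functions of its components. -/
noncomputable section
open scoped Real BigOperators
open Complex MeasureTheory

/-- The one-dimensional `sinc` function: `sin x / x` for `x ≠ 0` and `1` at `0`. -/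
def sinc (x : ℝ) : ℝ := if x = 0 then 1 else Real.sin x / x

/-- The `d`-variate `sinc` function, the product of the componentwise `sinc`s. -/
def dsinc {d : ℕ} (x : Fin d → ℝ) : ℝ := ∏ t, sinc (x t)

lemma sinc_neg (x : ℝ) : sinc (-x) = sinc x := by
  unfold sinc
  rcases eq_or_ne x 0 with h | h
  · simp [h]
  · rw [if_neg (neg_ne_zero.mpr h), if_neg h, Real.sin_neg]; ring

lemma key_integral (r : ℝ) :
    (∫ t in (-(1/2) : ℝ)..(1/2), Complex.exp ((2 * π * Complex.I * r) * t))
      = (sinc (π * r) : ℂ) := by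
  rcases eq_or_ne r 0 with hr | hr
  · norm_num [hr, sinc]
  · have hc : (2 * (π:ℂ) * Complex.I * r) ≠ 0 := by
      simp [Real.pi_ne_zero, Complex.I_ne_zero, hr]
    rw [integral_exp_mul_complex hc]
    have h1 : (2 * (π:ℂ) * Complex.I * r) * (1/2 : ℝ) = (π * r : ℝ) * Complex.I := by
      push_cast; ring
    have h2 : (2 * (π:ℂ) * Complex.I * r) * (-(1/2) : ℝ) = (-(π * r) : ℝ) * Complex.I := by
      push_cast; ring
    rw [h1, h2, Complex.exp_mul_I, Complex.exp_mul_I]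
    have hpr : (π * r : ℝ) ≠ 0 := mul_ne_zero Real.pi_ne_zero hr
    rw [sinc, if_neg hpr]
    push_cast
    have hI := Complex.I_ne_zero
    have hpi : (π:ℂ) ≠ 0 := Complex.ofReal_ne_zero.mpr Real.pi_ne_zero
    have hrc : (r:ℂ) ≠ 0 := Complex.ofReal_ne_zero.mpr hr
    field_simp
    rw [Complex.sin_neg, Complex.cos_neg]
    ring

instance fact_zero_lt_one_real : Fact ((0:ℝ) < 1) := ⟨one_pos⟩

def g (x : ℝ) : ℝ → ℂ := fun t => Complex.exp ((2 * π * Complex.I * x) * t)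

def F (x : ℝ) : AddCircle (1:ℝ) → ℂ := AddCircle.liftIoc 1 (-(1/2)) (g x)

lemma norm_g (x t : ℝ) : ‖g x t‖ = 1 := by
  simp [g, Complex.norm_exp]

lemma measurable_F (x : ℝ) : Measurable (F x) := by
  have h : F x = (Set.Ioc (-(1/2):ℝ) (-(1/2)+1)).restrict (g x)
      ∘ (AddCircle.measurableEquivIoc 1 (-(1/2))) := rfl
  rw [h]
  have hg : Continuous (g x) := by
    apply Complex.continuous_exp.comp
    exact (continuous_const.mul Complex.continuous_ofReal)
  exact (hg.measurable.comp measurable_subtype_coe).comp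
    (AddCircle.measurableEquivIoc 1 (-(1/2))).measurable

lemma memF (x : ℝ) : MeasureTheory.MemLp (F x) 2 AddCircle.haarAddCircle := by
  refine MemLp.of_bound (measurable_F x).aestronglyMeasurable 1 ?_
  filter_upwards with q
  have : F x q = g x ((AddCircle.equivIoc 1 (-(1/2)) q : ℝ)) := rfl
  rw [this, norm_g]

lemma coeff_F (x : ℝ) (n : ℤ) : fourierCoeff (F x) n = (sinc (π * (x - n)) : ℂ) := by
  rw [F, fourierCoeff_liftIoc_eq, fourierCoeffOn_eq_integral]
  have h2 : ∀ t : ℝ, (@fourier (-(1/2) + 1 - -(1/2)) (-n)) (t : ℝ) • g x t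
      = Complex.exp ((2 * π * Complex.I * (x - n)) * t) := by
    intro t
    rw [fourier_coe_apply, smul_eq_mul, g, ← Complex.exp_add]
    congr 1
    push_cast
    have : (-(1/2 : ℂ) + 1 - -(1/2)) = 1 := by ring
    rw [this]
    ring
  rw [intervalIntegral.integral_congr (fun t _ => h2 t)]
  have h3 : (-(1/2 : ℝ) + 1) = 1/2 := by norm_num
  rw [h3]
  rw [show ((x:ℂ) - (n:ℂ)) = ((x - n : ℝ) : ℂ) by push_cast; ring, key_integral (x - n)]
  norm_num

lemma inner_F (x y : ℝ) :
    (inner ℂ ((memF x).toLp (F x)) ((memF y).toLp (F y)) : ℂ) = (sinc (π * (x - y)) : ℂ) := by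
  rw [MeasureTheory.L2.inner_def]
  have hpt : ∀ q, (inner ℂ (F x q) (F y q) : ℂ) = F (y - x) q := by
    intro q
    rw [RCLike.inner_apply]
    show g y _ * (starRingEnd ℂ) (g x _) = g (y - x) _
    rw [g, g, g, ← Complex.exp_conj, ← Complex.exp_add]
    congr 1
    simp only [map_mul, Complex.conj_I, Complex.conj_ofReal, map_ofNat]
    push_cast
    ring
  have h1 : (∫ q, (inner ℂ (((memF x).toLp (F x) : Lp ℂ 2 AddCircle.haarAddCircle) q)
        ((((memF y).toLp (F y)) : Lp ℂ 2 AddCircle.haarAddCircle) q) : ℂ) ∂AddCircle.haarAddCircle)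
      = ∫ q, F (y - x) q ∂AddCircle.haarAddCircle := by
    apply integral_congr_ae
    filter_upwards [(memF x).coeFn_toLp, (memF y).coeFn_toLp] with q hq1 hq2
    rw [hq1, hq2, hpt]
  rw [h1]
  have h2 : (∫ q, F (y - x) q ∂AddCircle.haarAddCircle) = fourierCoeff (F (y - x)) 0 := by
    simp [fourierCoeff]
  rw [h2, coeff_F]
  have : π * (y - x - (0:ℤ)) = -(π * (x - y)) := by push_cast; ring
  rw [this, sinc_neg]

set_option maxHeartbeats 1000000 in
lemma sinc_1d (x y : ℝ) :
    Summable (fun n : ℤ => |sinc (π * (x - n)) * sinc (π * (y - n))|) ∧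
    ∑' n : ℤ, sinc (π * (x - n)) * sinc (π * (y - n)) = sinc (π * (x - y)) := by
  have hrepr : ∀ (z : ℝ) (n : ℤ),
      fourierBasis.repr ((memF z).toLp (F z)) n = (sinc (π * (z - n)) : ℂ) := by
    intro z n
    rw [fourierBasis_repr, ← coeff_F z n]
    simp only [fourierCoeff]
    refine integral_congr_ae ?_
    filter_upwards [(memF z).coeFn_toLp] with t ht
    rw [ht]
  have hsq : ∀ z : ℝ, Summable (fun n : ℤ => (sinc (π * (z - n)))^2) := by
    intro z
    have hs := lp.summable_inner (𝕜 := ℂ)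
      (fourierBasis.repr ((memF z).toLp (F z))) (fourierBasis.repr ((memF z).toLp (F z)))
    have heq : (fun i : ℤ => (inner ℂ ((fourierBasis.repr ((memF z).toLp (F z))) i)
        ((fourierBasis.repr ((memF z).toLp (F z))) i) : ℂ))
        = fun i : ℤ => (((sinc (π * (z - i)))^2 : ℝ) : ℂ) := by
      funext i
      rw [RCLike.inner_apply, hrepr, Complex.conj_ofReal]
      push_cast
      ring
    rw [heq] at hs
    exact Complex.summable_ofReal.mp hs
  have hsum := fourierBasis.hasSum_inner_mul_inner ((memF x).toLp (F x)) ((memF y).toLp (F y))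
  have hterm : (fun n : ℤ => (inner ℂ ((memF x).toLp (F x)) (fourierBasis n) : ℂ)
        * inner ℂ (fourierBasis n) ((memF y).toLp (F y)))
      = fun n : ℤ => ((sinc (π * (x - n)) * sinc (π * (y - n)) : ℝ) : ℂ) := by
    funext n
    rw [← fourierBasis.repr_apply_apply ((memF y).toLp (F y)) n, ← inner_conj_symm,
      ← fourierBasis.repr_apply_apply ((memF x).toLp (F x)) n, hrepr, hrepr, Complex.conj_ofReal]
    push_cast
    ring
  rw [hterm, inner_F] at hsum
  have hreal : HasSum (fun n : ℤ => sinc (π * (x - n)) * sinc (π * (y - n))) (sinc (π * (x - y))) :=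
    Complex.hasSum_ofReal.mp hsum
  refine ⟨?_, hreal.tsum_eq⟩
  refine Summable.of_nonneg_of_le (fun n => abs_nonneg _) (fun n => ?_)
    (((hsq x).add (hsq y)).div_const 2)
  rw [abs_mul]
  nlinarith [sq_nonneg (|sinc (π * (x - n))| - |sinc (π * (y - n))|),
    _root_.sq_abs (sinc (π * (x - n))), _root_.sq_abs (sinc (π * (y - n))),
    abs_nonneg (sinc (π * (x - n))), abs_nonneg (sinc (π * (y - n)))]

set_option maxHeartbeats 1600000 in
lemma pi_prod_tsum : ∀ (d : ℕ) (u : Fin d → ℤ → ℝ), (∀ t, Summable fun n => |u t n|) →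
    (Summable fun l : Fin d → ℤ => |∏ t, u t (l t)|) ∧
    (∑' l : Fin d → ℤ, ∏ t, u t (l t)) = ∏ t, ∑' n : ℤ, u t n := by
  intro d
  induction d with
  | zero =>
    intro u _
    constructor
    · exact Summable.of_finite
    · simp [tsum_fintype]
  | succ m ih =>
    intro u hu
    obtain ⟨S, E⟩ := ih (fun t => u t.succ) (fun t => hu t.succ)
    have key : ∀ p : ℤ × (Fin m → ℤ),
        (∏ t, u t ((Fin.cons p.1 p.2 : Fin (m+1) → ℤ) t)) = u 0 p.1 * ∏ t : Fin m, u t.succ (p.2 t) := by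
      intro p
      rw [Fin.prod_univ_succ]
      simp
    have habs : Summable fun p : ℤ × (Fin m → ℤ) =>
        |u 0 p.1| * |∏ t : Fin m, u t.succ (p.2 t)| := (hu 0).mul_of_nonneg S
      (fun n => abs_nonneg _) (fun l => abs_nonneg _)
    have e := Fin.consEquiv (fun _ : Fin (m + 1) => ℤ)
    constructor
    · rw [← (Fin.consEquiv (fun _ : Fin (m + 1) => ℤ)).summable_iff]
      apply habs.congr
      intro p
      simp only [Function.comp, Fin.consEquiv_apply]
      rw [key p, abs_mul]
    · rw [← (Fin.consEquiv (fun _ : Fin (m + 1) => ℤ)).tsum_eq]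
      have h1 : (∑' p : ℤ × (Fin m → ℤ), ∏ t, u t ((Fin.consEquiv (fun _ => ℤ)) p t))
          = ∑' p : ℤ × (Fin m → ℤ), u 0 p.1 * ∏ t : Fin m, u t.succ (p.2 t) := by
        apply tsum_congr
        intro p
        exact key p
      rw [h1, ← tsum_mul_tsum_of_summable_norm (f := fun n : ℤ => u 0 n)
        (g := fun l : Fin m → ℤ => ∏ t : Fin m, u t.succ (l t))
        (by simpa only [Real.norm_eq_abs] using hu 0) (by simpa only [Real.norm_eq_abs] using S), E,
        Fin.prod_univ_succ]

/-- the series `∑_{ℓ∈ℤ^d} sinc(Mπ(a - y_ℓ)) sinc(Mπ(b - y_ℓ))`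
over the equispaced points `y_ℓ = ℓ/M` converges absolutely and equals
`sinc(Mπ(a - b))`. -/
theorem sinc_series_identity
    (d : ℕ) (hd : 1 ≤ d) (M : ℝ) (hM : 0 < M)
    (a b : Fin d → ℝ)
    (y : (Fin d → ℤ) → Fin d → ℝ) (hy : ∀ l t, y l t = (l t : ℝ) / M) :
    (Summable fun l : Fin d → ℤ =>
      |dsinc (fun t => M * π * (a t - y l t)) * dsinc (fun t => M * π * (b t - y l t))|) ∧
    (∑' l : Fin d → ℤ,
      dsinc (fun t => M * π * (a t - y l t)) * dsinc (fun t => M * π * (b t - y l t))) =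
      dsinc (fun t => M * π * (a t - b t)) := by
  have hMne : M ≠ 0 := ne_of_gt hM
  set u : Fin d → ℤ → ℝ :=
    fun t n => sinc (π * (M * a t - n)) * sinc (π * (M * b t - n)) with hu
  have husum : ∀ t, Summable fun n => |u t n| := fun t => (sinc_1d (M * a t) (M * b t)).1
  have hterm : ∀ l : Fin d → ℤ,
      dsinc (fun t => M * π * (a t - y l t)) * dsinc (fun t => M * π * (b t - y l t))
        = ∏ t, u t (l t) := by
    intro l
    rw [dsinc, dsinc, ← Finset.prod_mul_distrib]
    apply Finset.prod_congr rfl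
    intro t _
    rw [hy]
    have harg : ∀ c : ℝ, M * π * (c - (l t : ℝ) / M) = π * (M * c - l t) := by
      intro c; field_simp
    rw [harg (a t), harg (b t)]
  obtain ⟨S, E⟩ := pi_prod_tsum d u husum
  constructor
  · exact S.congr fun l => by rw [hterm l]
  · rw [tsum_congr hterm, E, dsinc]
    apply Finset.prod_congr rfl
    intro t _
    rw [(sinc_1d (M * a t) (M * b t)).2]
    congr 1
    ring
end
end

section
/- Let d, N ∈ ℕ with d ≥ 1, let M be a positive even integer, and let x_1, …, x_N ∈ [0,1)^d. Let A := (e^{2πi k·x_j})_{j=1,…,N; k∈I_M} ∈ ℂ^{N×M^d} be the nonequispaced Fourier matrix, define the matrix S ∈ ℝ^{N×N} by S_{j,s} := |[A A*]_{j,s}|² = |∑_{k∈I_M} e^{2πi k·(x_j − x_s)}|², and let b := M^d · (1, …, 1)^T ∈ ℝ^N. Then a vector w ∈ ℂ^N minimizes the squared Frobenius norm F(w) := ‖ A* diag(w) A − I_{M^d} ‖_F² over all w ∈ ℂ^N if and only if S w = b. Moreover, F(w) = w* S w − 2 Re(w* b) + M^d for all w ∈ ℂ^N. -/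
noncomputable section
open scoped Real BigOperators
open Complex Matrix

/-- The multi-index set `I_M := {k ∈ ℤ^d : -M/2 ≤ k_t < M/2 for all t}`. -/
def indexSet (d M : ℕ) : Finset (Fin d → ℤ) :=
  Finset.Icc (fun _ => -(M : ℤ) / 2) (fun _ => (M : ℤ) / 2 - 1)

namespace FrobeniusAux

open ComplexConjugate

lemma sum4 {α β : Type*} [Fintype α] [Fintype β] (f : α → α → β → β → ℂ) :
    ∑ k : α, ∑ l : α, ∑ j : β, ∑ s : β, f k l j s
      = ∑ j : β, ∑ s : β, ∑ k : α, ∑ l : α, f k l j s := by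
  calc ∑ k : α, ∑ l : α, ∑ j : β, ∑ s : β, f k l j s
      = ∑ k : α, ∑ j : β, ∑ l : α, ∑ s : β, f k l j s :=
        Finset.sum_congr rfl fun k _ => Finset.sum_comm
    _ = ∑ j : β, ∑ k : α, ∑ l : α, ∑ s : β, f k l j s := Finset.sum_comm
    _ = ∑ j : β, ∑ k : α, ∑ s : β, ∑ l : α, f k l j s :=
        Finset.sum_congr rfl fun j _ => Finset.sum_congr rfl fun k _ => Finset.sum_comm
    _ = ∑ j : β, ∑ s : β, ∑ k : α, ∑ l : α, f k l j s :=
        Finset.sum_congr rfl fun j _ => Finset.sum_comm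

lemma entry {n m : Type*} [Fintype n] [DecidableEq n] (A : Matrix n m ℂ) (w : n → ℂ) (k l : m) :
    (Aᴴ * Matrix.diagonal w * A) k l = ∑ j, conj (A j k) * w j * A j l := by
  rw [Matrix.mul_apply]
  simp [Matrix.mul_diagonal, Matrix.conjTranspose_apply]

lemma ip {n m : Type*} [Fintype n] [Fintype m] [DecidableEq n] (A : Matrix n m ℂ) (u v : n → ℂ) :
    ∑ k : m, ∑ l : m, conj ((Aᴴ * Matrix.diagonal u * A) k l) * ((Aᴴ * Matrix.diagonal v * A) k l)
      = ∑ j, ∑ s, conj (u j) * ((A * Aᴴ) j s * conj ((A * Aᴴ) j s)) * v s := by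
  simp_rw [entry, map_sum, _root_.map_mul, Complex.conj_conj, Finset.sum_mul_sum,
    Matrix.mul_apply, Matrix.conjTranspose_apply, Complex.star_def, map_sum,
    _root_.map_mul, Complex.conj_conj, Finset.mul_sum, Finset.sum_mul]
  rw [sum4]
  refine Finset.sum_congr rfl fun j _ => Finset.sum_congr rfl fun s _ => ?_
  simp_rw [Finset.mul_sum, Finset.sum_mul]
  rw [Finset.sum_comm]
  exact Finset.sum_congr rfl fun k _ => Finset.sum_congr rfl fun l _ => by ring

lemma tr {n m : Type*} [Fintype n] [Fintype m] [DecidableEq n] (A : Matrix n m ℂ)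
    (h1 : ∀ j k, conj (A j k) * A j k = 1) (w : n → ℂ) :
    ∑ k : m, (Aᴴ * Matrix.diagonal w * A) k k = (∑ j, w j) * (Fintype.card m : ℂ) := by
  simp_rw [entry]
  rw [Finset.sum_comm, Finset.sum_mul]
  refine Finset.sum_congr rfl fun j _ => ?_
  calc ∑ k : m, conj (A j k) * w j * A j k = ∑ _k : m, w j :=
        Finset.sum_congr rfl fun k _ => by
          rw [mul_comm (conj (A j k)) (w j), mul_assoc, h1, mul_one]
    _ = w j * (Fintype.card m : ℂ) := by
        rw [Finset.sum_const, Finset.card_univ, nsmul_eq_mul, mul_comm]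

lemma fval {n m : Type*} [Fintype n] [Fintype m] [DecidableEq n] [DecidableEq m]
    (A : Matrix n m ℂ) (h1 : ∀ j k, conj (A j k) * A j k = 1) (w : n → ℂ) :
    ∑ k : m, ∑ l : m, ‖(Aᴴ * Matrix.diagonal w * A - (1 : Matrix m m ℂ)) k l‖ ^ 2
      = (∑ j, ∑ s, conj (w j) * ((A * Aᴴ) j s * conj ((A * Aᴴ) j s)) * w s).re
        - 2 * (∑ j, conj (w j) * (Fintype.card m : ℂ)).re + (Fintype.card m : ℝ) := by
  set T : Matrix m m ℂ := Aᴴ * Matrix.diagonal w * A with hT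
  have hnorm : ∀ z : ℂ, ‖z‖ ^ 2 = (conj z * z).re := fun z => by
    rw [Complex.conj_mul', ← Complex.ofReal_pow, Complex.ofReal_re]
  have e1 : ∀ k l : m, ‖(T - 1) k l‖ ^ 2
      = (conj (T k l) * T k l - conj (T k l) * (1 : Matrix m m ℂ) k l
          - conj ((1 : Matrix m m ℂ) k l) * T k l
          + conj ((1 : Matrix m m ℂ) k l) * (1 : Matrix m m ℂ) k l).re := by
    intro k l
    rw [hnorm]
    congr 1
    simp only [Matrix.sub_apply, map_sub]
    ring
  simp_rw [e1, ← Complex.re_sum, Finset.sum_add_distrib, Finset.sum_sub_distrib]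
  have p1 := ip A w w
  have p2 : ∑ k : m, ∑ l : m, conj (T k l) * (1 : Matrix m m ℂ) k l
      = conj ((∑ j, w j) * (Fintype.card m : ℂ)) := by
    rw [← tr A h1 w, map_sum]
    refine Finset.sum_congr rfl fun k _ => ?_
    simp [Matrix.one_apply, mul_ite, mul_one, mul_zero]
    rfl
  have p3 : ∑ k : m, ∑ l : m, conj ((1 : Matrix m m ℂ) k l) * T k l
      = (∑ j, w j) * (Fintype.card m : ℂ) := by
    rw [← tr A h1 w]
    refine Finset.sum_congr rfl fun k _ => ?_
    simp [Matrix.one_apply, ite_mul, one_mul, zero_mul, apply_ite (starRingEnd ℂ)]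
    rfl
  have p4 : ∑ k : m, ∑ l : m, conj ((1 : Matrix m m ℂ) k l) * (1 : Matrix m m ℂ) k l
      = (Fintype.card m : ℂ) := by
    simp [Matrix.one_apply, apply_ite (starRingEnd ℂ), mul_ite, mul_one, mul_zero,
      Finset.sum_ite_eq', Finset.card_univ]
  rw [p1, p2, p3, p4]
  have hlin : (∑ j, conj (w j) * (Fintype.card m : ℂ)).re
      = ((∑ j, w j) * (Fintype.card m : ℂ)).re := by
    rw [← Finset.sum_mul, ← map_sum]
    simp [Complex.mul_re]
  simp only [Complex.add_re, Complex.sub_re, Complex.conj_re, hlin, Complex.natCast_re]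
  ring

/-- The sesquilinear form associated to a kernel `Sc`. -/
def QS {ι : Type*} [Fintype ι] (Sc : ι → ι → ℂ) (u v : ι → ℂ) : ℂ :=
  ∑ j, ∑ s, conj (u j) * Sc j s * v s

lemma QS_conj {ι : Type*} [Fintype ι] (Sc : ι → ι → ℂ)
    (hsym : ∀ j s, conj (Sc j s) = Sc s j) (u v : ι → ℂ) :
    conj (QS Sc u v) = QS Sc v u := by
  unfold QS
  rw [map_sum]
  calc ∑ j, conj (∑ s, conj (u j) * Sc j s * v s)
      = ∑ j, ∑ s, conj (v s) * Sc s j * u j := by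
        refine Finset.sum_congr rfl fun j _ => ?_
        rw [map_sum]
        refine Finset.sum_congr rfl fun s _ => ?_
        rw [_root_.map_mul, _root_.map_mul, Complex.conj_conj, hsym]
        ring
    _ = ∑ s, ∑ j, conj (v s) * Sc s j * u j := Finset.sum_comm
    _ = ∑ j, ∑ s, conj (v j) * Sc j s * u s := rfl

lemma QS_expand {ι : Type*} [Fintype ι] (Sc : ι → ι → ℂ) (w h : ι → ℂ) :
    QS Sc (w + h) (w + h) = QS Sc w w + QS Sc w h + QS Sc h w + QS Sc h h := by
  unfold QS
  simp only [Pi.add_apply, map_add, add_mul, mul_add, Finset.sum_add_distrib]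
  ring

lemma QS_right {ι : Type*} [Fintype ι] (Sc : ι → ι → ℂ) (u w : ι → ℂ) :
    QS Sc u w = ∑ j, conj (u j) * (∑ s, Sc j s * w s) := by
  unfold QS
  refine Finset.sum_congr rfl fun j _ => ?_
  rw [Finset.mul_sum]
  exact Finset.sum_congr rfl fun s _ => by ring

lemma minimizer {ι : Type*} [Fintype ι] (Sc : ι → ι → ℂ) (b c : ℝ)
    (hsym : ∀ j s, conj (Sc j s) = Sc s j)
    (hpos : ∀ u : ι → ℂ, 0 ≤ (QS Sc u u).re)
    (F : (ι → ℂ) → ℝ)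
    (hF : ∀ w, F w = (QS Sc w w).re - 2 * (∑ j, conj (w j) * (b : ℂ)).re + c)
    (w : ι → ℂ) :
    (∀ v, F w ≤ F v) ↔ ∀ j, ∑ s, Sc j s * w s = (b : ℂ) := by
  have Fexp : ∀ h : ι → ℂ, F (w + h)
      = F w + (QS Sc h h).re
        + 2 * (∑ j, conj (h j) * ((∑ s, Sc j s * w s) - (b : ℂ))).re := by
    intro h
    rw [hF, hF, QS_expand]
    have h1 : (QS Sc w h).re = (QS Sc h w).re := by
      rw [← QS_conj Sc hsym h w, Complex.conj_re]
    have h2 : ∑ j, conj (h j) * ((∑ s, Sc j s * w s) - (b : ℂ))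
        = QS Sc h w - ∑ j, conj (h j) * (b : ℂ) := by
      rw [QS_right, ← Finset.sum_sub_distrib]
      exact Finset.sum_congr rfl fun j _ => by ring
    have h3 : ∑ j, conj ((w + h) j) * (b : ℂ)
        = (∑ j, conj (w j) * (b : ℂ)) + ∑ j, conj (h j) * (b : ℂ) := by
      rw [← Finset.sum_add_distrib]
      refine Finset.sum_congr rfl fun j _ => ?_
      simp only [Pi.add_apply, map_add]
      ring
    rw [h2, h3]
    simp only [Complex.add_re, Complex.sub_re, h1]
    ring
  constructor
  · intro hmin
    by_contra hne
    push_neg at hne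
    obtain ⟨j0, hj0⟩ := hne
    set g : ι → ℂ := fun j => (∑ s, Sc j s * w s) - (b : ℂ) with hg
    have hg0 : g j0 ≠ 0 := sub_ne_zero.mpr hj0
    set Gn : ℝ := ∑ j, Complex.normSq (g j) with hGndef
    have hGn : 0 < Gn :=
      lt_of_lt_of_le (Complex.normSq_pos.mpr hg0)
        (Finset.single_le_sum (fun i _ => Complex.normSq_nonneg _) (Finset.mem_univ j0))
    set Qg : ℝ := (QS Sc g g).re with hQgdef
    have hQg : 0 ≤ Qg := hpos g
    set t : ℝ := Gn / (Qg + Gn) with htdef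
    have ht0 : 0 < t := div_pos hGn (by linarith)
    have htmul : t * (Qg + Gn) = Gn := div_mul_cancel₀ _ (by linarith)
    set h : ι → ℂ := fun j => -(t : ℂ) * g j with hh
    have hQh : (QS Sc h h).re = t ^ 2 * Qg := by
      have e : QS Sc h h = ((t ^ 2 : ℝ) : ℂ) * QS Sc g g := by
        unfold QS
        rw [Finset.mul_sum]
        refine Finset.sum_congr rfl fun j _ => ?_
        rw [Finset.mul_sum]
        refine Finset.sum_congr rfl fun s _ => ?_
        simp only [hh, _root_.map_mul, map_neg, Complex.conj_ofReal]
        push_cast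
        ring
      rw [e, Complex.re_ofReal_mul, hQgdef]
    have hlin : (∑ j, conj (h j) * g j).re = -(t * Gn) := by
      have e : ∑ j, conj (h j) * g j = -(t : ℂ) * ∑ j, ((Complex.normSq (g j) : ℝ) : ℂ) := by
        rw [Finset.mul_sum]
        refine Finset.sum_congr rfl fun j _ => ?_
        rw [← Complex.mul_conj (g j)]
        simp only [hh, _root_.map_mul, map_neg, Complex.conj_ofReal]
        ring
      have e2 : (∑ j, ((Complex.normSq (g j) : ℝ) : ℂ)) = ((Gn : ℝ) : ℂ) := by
        rw [hGndef]; push_cast; rfl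
      have e3 : -(t:ℂ) * ((Gn:ℝ):ℂ) = ((-(t*Gn) : ℝ) : ℂ) := by push_cast; ring
      rw [e, e2, e3, Complex.ofReal_re]
    have key := Fexp h
    rw [hQh] at key
    rw [show (∑ j, conj (h j) * ((∑ s, Sc j s * w s) - (b : ℂ))) = ∑ j, conj (h j) * g j from rfl,
      hlin] at key
    have hlt : F (w + h) < F w := by
      rw [key]
      nlinarith [mul_pos ht0 hGn, mul_pos (mul_pos ht0 ht0) hGn, htmul,
        mul_nonneg (mul_nonneg ht0.le ht0.le) hQg]
    exact absurd (hmin (w + h)) (not_le.mpr hlt)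
  · intro hsol v
    have hv : v = w + (v - w) := by funext j; simp
    rw [hv, Fexp (v - w)]
    have : ∀ j, (∑ s, Sc j s * w s) - (b : ℂ) = 0 := fun j => sub_eq_zero.mpr (hsol j)
    simp only [this, mul_zero, Finset.sum_const_zero, Complex.zero_re, add_zero]
    linarith [hpos (v - w)]

end FrobeniusAux

/-- `w` minimizes `F(w) = ‖A* diag(w) A - I‖_F²` iff `S w = b`
where `S_{j,s} = |[A A*]_{j,s}|²` and `b = M^d·(1,…,1)ᵀ`; moreover
`F(w) = w* S w - 2 Re(w* b) + M^d`. -/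
theorem frobenius_minimizer_iff_Sw_eq_b
    (d N M : ℕ) (hd : 1 ≤ d) (hM : 0 < M) (hMeven : Even M)
    (x : Fin N → Fin d → ℝ) (hx : ∀ j t, x j t ∈ Set.Ico (0 : ℝ) 1)
    (A : Matrix (Fin N) ↥(indexSet d M) ℂ)
    (hA : ∀ (j : Fin N) (k : ↥(indexSet d M)),
      A j k = Complex.exp (2 * π * I * ∑ t, ((k : Fin d → ℤ) t : ℂ) * (x j t : ℂ)))
    (S : Matrix (Fin N) (Fin N) ℝ)
    (hS : ∀ j s, S j s = ‖(A * Aᴴ) j s‖ ^ 2)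
    (F : (Fin N → ℂ) → ℝ)
    (hF : ∀ w, F w = ∑ k : ↥(indexSet d M), ∑ l : ↥(indexSet d M),
      ‖(Aᴴ * Matrix.diagonal w * A - (1 : Matrix ↥(indexSet d M) ↥(indexSet d M) ℂ)) k l‖ ^ 2) :
    (∀ w : Fin N → ℂ,
      ((∀ v : Fin N → ℂ, F w ≤ F v) ↔
        ∀ j, ∑ s, (S j s : ℂ) * w s = (M : ℂ) ^ d)) ∧
    (∀ w : Fin N → ℂ,
      F w = (∑ j, ∑ s, starRingEnd ℂ (w j) * (S j s : ℂ) * w s).re -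
        2 * (∑ j, starRingEnd ℂ (w j) * ((M : ℂ) ^ d)).re + (M : ℝ) ^ d) := by
  classical
  open ComplexConjugate FrobeniusAux in
  -- cardinality of the index set
  have hcard : Fintype.card ↥(indexSet d M) = M ^ d := by
    rw [Fintype.card_coe]
    unfold indexSet
    rw [Pi.card_Icc]
    have hm2 : (M : ℤ) % 2 = 0 := by
      obtain ⟨r, hr⟩ := hMeven; omega
    have hIcc : ∀ _t : Fin d, (Finset.Icc (-(M:ℤ)/2) ((M:ℤ)/2 - 1)).card = M := by
      intro t
      rw [Int.card_Icc]
      omega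
    rw [Finset.prod_congr rfl fun t _ => hIcc t]
    simp
  -- matrix entries have unit modulus
  have h1 : ∀ (j : Fin N) (k : ↥(indexSet d M)), conj (A j k) * A j k = 1 := by
    intro j k
    rw [hA]
    rw [← Complex.exp_conj, ← Complex.exp_add]
    have hc : conj (2 * π * I * ∑ t, (((k : Fin d → ℤ) t : ℤ) : ℂ) * (x j t : ℂ))
        = -(2 * π * I * ∑ t, (((k : Fin d → ℤ) t : ℤ) : ℂ) * (x j t : ℂ)) := by
      simp only [_root_.map_mul, map_sum, map_ofNat, Complex.conj_ofReal, Complex.conj_I,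
        map_intCast]
      ring
    rw [hc, neg_add_cancel, Complex.exp_zero]
  -- the casted kernel
  have Scast : ∀ j s, ((S j s : ℝ) : ℂ) = (A * Aᴴ) j s * conj ((A * Aᴴ) j s) := by
    intro j s
    rw [hS, Complex.mul_conj']
    push_cast
    ring
  -- symmetry of the kernel
  have hherm : ∀ j s, (A * Aᴴ) s j = conj ((A * Aᴴ) j s) := by
    intro j s
    have h0 : (A * Aᴴ)ᴴ = A * Aᴴ := by
      rw [Matrix.conjTranspose_mul, Matrix.conjTranspose_conjTranspose]
    conv_lhs => rw [← h0]
    rw [Matrix.conjTranspose_apply]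
    rfl
  have hsym : ∀ j s : Fin N,
      conj ((fun j s => ((S j s : ℝ) : ℂ)) j s) = (fun j s => ((S j s : ℝ) : ℂ)) s j := by
    intro j s
    simp only [Complex.conj_ofReal]
    congr 1
    rw [hS, hS, hherm]
    simp
  -- positivity of the quadratic form
  have hQSe : ∀ u v : Fin N → ℂ, QS (fun j s => ((S j s : ℝ) : ℂ)) u v
      = ∑ k : ↥(indexSet d M), ∑ l : ↥(indexSet d M),
          conj ((Aᴴ * Matrix.diagonal u * A) k l) * ((Aᴴ * Matrix.diagonal v * A) k l) := by
    intro u v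
    rw [ip A u v]
    unfold QS
    exact Finset.sum_congr rfl fun j _ => Finset.sum_congr rfl fun s _ => by simp only [Scast]
  have hpos : ∀ u : Fin N → ℂ, 0 ≤ (QS (fun j s => ((S j s : ℝ) : ℂ)) u u).re := by
    intro u
    rw [hQSe u u, Complex.re_sum]
    refine Finset.sum_nonneg fun k _ => ?_
    rw [Complex.re_sum]
    refine Finset.sum_nonneg fun l _ => ?_
    rw [Complex.conj_mul', ← Complex.ofReal_pow, Complex.ofReal_re]
    positivity
  have hb : (((M:ℝ)^d : ℝ) : ℂ) = (M : ℂ) ^ d := by push_cast; ring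
  -- the F-value formula
  have hFval : ∀ w : Fin N → ℂ, F w
      = (QS (fun j s => ((S j s : ℝ) : ℂ)) w w).re
        - 2 * (∑ j, conj (w j) * (((M:ℝ)^d : ℝ) : ℂ)).re + (M:ℝ)^d := by
    intro w
    rw [hF w, fval A h1 w]
    have e1 : QS (fun j s => ((S j s : ℝ) : ℂ)) w w
        = ∑ j, ∑ s, conj (w j) * ((A * Aᴴ) j s * conj ((A * Aᴴ) j s)) * w s := by
      unfold QS
      exact Finset.sum_congr rfl fun j _ => Finset.sum_congr rfl fun s _ => by simp only [Scast]
    rw [e1, hcard]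
    have e2 : ((M ^ d : ℕ) : ℂ) = (((M:ℝ)^d : ℝ) : ℂ) := by push_cast; ring
    have e3 : ((M ^ d : ℕ) : ℝ) = (M:ℝ)^d := by push_cast; ring
    rw [e2, e3]
  constructor
  · intro w
    have hmain := minimizer (fun j s => ((S j s : ℝ) : ℂ)) ((M:ℝ)^d) ((M:ℝ)^d)
      hsym hpos F hFval w
    simpa only [hb] using hmain
  · intro w
    rw [hFval w]
    simp only [QS, hb]
end
end
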